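/- For all A, B, C in A(q), the triple product A · adj(B) · C again lies in A(q). -/
import Mathlib

/-- The matrix `[x,y]_q`. -/
def Mq (a b c h k x y : ℚ) : Matrix (Fin 2) (Fin 2) ℚ :=
  !![x - h, -c * (y - k); y - k, a * (x - h) + b * (y - k)]

/-- The set `A(q)` of matrices `[x,y]_q`. -/
def Aq (a b c h k : ℚ) : Set (Matrix (Fin 2) (Fin 2) ℚ) :=
  {M | ∃ x y : ℚ, M = Mq a b c h k x y}

/-- `A(q)` is closed under the triple product `A · adj(B) · C`. -/
theorem Aq_closed_triple_product (a b c h k : ℚ) :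
    ∀ A ∈ Aq a b c h k, ∀ B ∈ Aq a b c h k, ∀ C ∈ Aq a b c h k,
      A * B.adjugate * C ∈ Aq a b c h k := by
  rintro A ⟨x1, y1, rfl⟩ B ⟨x2, y2, rfl⟩ C ⟨x3, y3, rfl⟩
  set u1 := x1 - h; set v1 := y1 - k
  set u2 := x2 - h; set v2 := y2 - k
  set u3 := x3 - h; set v3 := y3 - k
  refine ⟨(u3 * (a * u1 * u2 + b * u1 * v2 + c * v1 * v2)
      + c * v3 * (u1 * v2 - v1 * u2)) + h,
    (a * u3 * (v1 * u2 - u1 * v2)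
      + v3 * (c * v1 * v2 + a * u1 * u2 + b * u2 * v1)) + k, ?_⟩
  ext i j
  fin_cases i <;> fin_cases j <;>
    simp [Mq, Matrix.adjugate_fin_two, Matrix.mul_apply, Fin.sum_univ_two, u1, v1, u2, v2, u3, v3] <;>
    ring
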